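/- arXiv:2505.23623 — 2 statements merged into one kernel-verified Lean document; each statement's English description precedes it below -/
import Mathlib

section
/- Let Σ be a finite alphabet containing two distinct symbols a and b. The language aΣ*b of all strings that begin with a and end with b is definable in LTL[P,F] but is not PTL-definable; consequently PTL is strictly less expressive than LTL[P,F]. -/
/-- PTL formulas over alphabet `α`: atoms, conjunction, negation, and the past operator. -/
inductive PTL (α : Type*) : Type _
  | atom : α → PTL α
  | conj : PTL α → PTL α → PTL α
  | neg : PTL α → PTL α
  | past : PTL α → PTL α

/-- Satisfaction of a PTL formula in string `w` at (1-based) position `n ∈ {1,…,N+1}`. -/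
def PTL.Sat {α : Type*} (w : List α) : PTL α → ℕ → Prop
  | .atom a, n => 1 ≤ n ∧ w[n - 1]? = some a
  | .conj ψ₁ ψ₂, n => PTL.Sat w ψ₁ n ∧ PTL.Sat w ψ₂ n
  | .neg ψ, n => ¬ PTL.Sat w ψ n
  | .past ψ, n => ∃ m, 1 ≤ m ∧ m < n ∧ PTL.Sat w ψ m

/-- A string `w` of length `N` satisfies `ψ` iff `w, N+1 ⊨ ψ`. -/
def PTL.Models {α : Type*} (w : List α) (ψ : PTL α) : Prop :=
  PTL.Sat w ψ (w.length + 1)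

/-- A language is PTL-definable if it is the set of strings satisfying some PTL formula. -/
def PTLDefinable {α : Type*} (L : Set (List α)) : Prop :=
  ∃ ψ : PTL α, ∀ w : List α, w ∈ L ↔ PTL.Models w ψ

/-- LTL[P,F] formulas: PTL extended with the future operator. -/
inductive LTLPF (α : Type*) : Type _
  | atom : α → LTLPF α
  | conj : LTLPF α → LTLPF α → LTLPF α
  | neg : LTLPF α → LTLPF α
  | past : LTLPF α → LTLPF α
  | future : LTLPF α → LTLPF α

/-- Satisfaction of an LTL[P,F] formula in `w` at position `n`. -/
def LTLPF.Sat {α : Type*} (w : List α) : LTLPF α → ℕ → Prop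
  | .atom a, n => 1 ≤ n ∧ w[n - 1]? = some a
  | .conj ψ₁ ψ₂, n => LTLPF.Sat w ψ₁ n ∧ LTLPF.Sat w ψ₂ n
  | .neg ψ, n => ¬ LTLPF.Sat w ψ n
  | .past ψ, n => ∃ m, 1 ≤ m ∧ m < n ∧ LTLPF.Sat w ψ m
  | .future ψ, n => ∃ m, n < m ∧ m ≤ w.length ∧ LTLPF.Sat w ψ m

/-- A string `w` of length `N` satisfies `ψ` iff `w, N+1 ⊨ ψ`. -/
def LTLPF.Models {α : Type*} (w : List α) (ψ : LTLPF α) : Prop :=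
  LTLPF.Sat w ψ (w.length + 1)

/-- A language is LTL[P,F]-definable. -/
def LTLPFDefinable {α : Type*} (L : Set (List α)) : Prop :=
  ∃ ψ : LTLPF α, ∀ w : List α, w ∈ L ↔ LTLPF.Models w ψ

section Aux

variable {α : Type*}

/-- Satisfaction at position `n ≤ w.length` only depends on the prefix. -/
lemma PTL.sat_append (w v : List α) (ψ : PTL α) :
    ∀ n, 1 ≤ n → n ≤ w.length → (PTL.Sat w ψ n ↔ PTL.Sat (w ++ v) ψ n) := by
  induction ψ with
  | atom c =>
      intro n h1 h2
      have : (w ++ v)[n - 1]? = w[n - 1]? := List.getElem?_append_left (by omega)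
      simp [PTL.Sat, this]
  | conj ψ₁ ψ₂ ih1 ih2 =>
      intro n h1 h2
      simp [PTL.Sat, ih1 n h1 h2, ih2 n h1 h2]
  | neg ψ ih =>
      intro n h1 h2
      simp [PTL.Sat, ih n h1 h2]
  | past ψ ih =>
      intro n h1 h2
      constructor
      · rintro ⟨m, hm1, hm2, hm3⟩
        exact ⟨m, hm1, hm2, (ih m hm1 (by omega)).mp hm3⟩
      · rintro ⟨m, hm1, hm2, hm3⟩
        exact ⟨m, hm1, hm2, (ih m hm1 (by omega)).mpr hm3⟩

/-- `P χ` at the end position is monotone under appending a letter. -/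
lemma PTL.past_mono (w : List α) (x : α) (χ : PTL α)
    (h : PTL.Sat w (.past χ) (w.length + 1)) :
    PTL.Sat (w ++ [x]) (.past χ) ((w ++ [x]).length + 1) := by
  obtain ⟨m, h1, h2, h3⟩ := h
  exact ⟨m, h1, by simp; omega, (PTL.sat_append w [x] χ m h1 (by omega)).mp h3⟩

/-- Embedding of PTL into LTL[P,F]. -/
def PTL.toLTLPF : PTL α → LTLPF α
  | .atom c => .atom c
  | .conj ψ₁ ψ₂ => .conj ψ₁.toLTLPF ψ₂.toLTLPF
  | .neg ψ => .neg ψ.toLTLPF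
  | .past ψ => .past ψ.toLTLPF

lemma PTL.sat_toLTLPF (w : List α) (ψ : PTL α) :
    ∀ n, (LTLPF.Sat w ψ.toLTLPF n ↔ PTL.Sat w ψ n) := by
  induction ψ with
  | atom c => intro n; simp [PTL.Sat, LTLPF.Sat, PTL.toLTLPF]
  | conj ψ₁ ψ₂ ih1 ih2 => intro n; simp [PTL.Sat, LTLPF.Sat, PTL.toLTLPF, ih1 n, ih2 n]
  | neg ψ ih => intro n; simp [PTL.Sat, LTLPF.Sat, PTL.toLTLPF, ih n]
  | past ψ ih => intro n; simp only [PTL.Sat, LTLPF.Sat, PTL.toLTLPF, ih]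

end Aux

/-- The language `aΣ*b` is LTL[P,F]-definable but not PTL-definable;
consequently PTL is strictly less expressive than LTL[P,F]. -/
theorem aSigmaStarB_separates {α : Type*} [Fintype α] (a b : α) (hab : a ≠ b) :
    LTLPFDefinable {w : List α | ∃ u : List α, w = a :: u ++ [b]} ∧
    ¬ PTLDefinable {w : List α | ∃ u : List α, w = a :: u ++ [b]} ∧
    (∀ L : Set (List α), PTLDefinable L → LTLPFDefinable L) := by
  refine ⟨?_, ?_, ?_⟩
  · -- LTL[P,F] definability
    -- `top` is a tautology
    set top : LTLPF α := .neg (.conj (.atom a) (.neg (.atom a))) with htopdef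
    have htop : ∀ (w : List α) (n : ℕ), LTLPF.Sat w top n := by
      intro w n; simp [LTLPF.Sat, htopdef]
    refine ⟨.conj (.past (.conj (.atom a) (.neg (.past top))))
              (.past (.conj (.atom b) (.neg (.future top)))), ?_⟩
    intro w
    constructor
    · rintro ⟨u, rfl⟩
      constructor
      · refine ⟨1, le_refl 1, by simp, ⟨le_refl 1, by simp⟩, ?_⟩
        rintro ⟨m', h1, h2, -⟩; omega
      · refine ⟨(a :: u ++ [b]).length, by simp, by omega, ⟨by simp, ?_⟩, ?_⟩
        · have : (a :: u ++ [b]).length - 1 = u.length + 1 := by simp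
          rw [this]
          have : (a :: u ++ [b])[u.length + 1]? = ((a :: u) ++ [b])[(a :: u).length + 0]? := by
            simp
          rw [this, List.getElem?_append_right (by omega)]
          simp
        · rintro ⟨m', h1, h2, -⟩; omega
    · rintro ⟨⟨m, hm1, hm2, ⟨-, hma⟩, hnopast⟩, ⟨k, hk1, hk2, ⟨-, hkb⟩, hnofut⟩⟩
      -- m must be 1
      have hm : m = 1 := by
        by_contra h
        exact hnopast ⟨1, le_refl 1, by omega, htop w 1⟩
      -- k must be w.length
      have hk : k = w.length := by
        by_contra h
        exact hnofut ⟨k + 1, by omega, by omega, htop w (k + 1)⟩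
      subst hm hk
      simp only [Nat.sub_self] at hma
      -- w starts with a
      have hw0 : w[0]? = some a := hma
      have hwne : w ≠ [] := by
        intro h; rw [h] at hw0; simp at hw0
      obtain ⟨c, t, rfl⟩ := List.exists_cons_of_ne_nil hwne
      have hca : c = a := by simpa using hw0
      rw [hca] at hkb ⊢
      -- tail is nonempty since last letter is b ≠ a
      have htne : t ≠ [] := by
        rintro rfl
        simp at hkb
        exact hab hkb
      -- last letter of t is b
      have hlen : (a :: t).length - 1 = t.length := by simp
      rw [hlen] at hkb
      have ht : t[t.length - 1]? = some b := by
        have : (a :: t)[t.length]? = t[t.length - 1]? := by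
          rcases Nat.exists_eq_add_of_lt (List.length_pos_iff.mpr htne) with ⟨j, hj⟩
          simp [hj]
        rw [← this]; exact hkb
      have hgl : t.getLast htne = b := by
        have := List.getLast_eq_getElem (l := t) htne
        rw [this]
        have h2 : t[t.length - 1]'(by have := List.length_pos_iff.mpr htne; omega) = b := by
          have := List.getElem?_eq_getElem (l := t) (i := t.length - 1)
            (by have := List.length_pos_iff.mpr htne; omega)
          rw [this] at ht; exact Option.some.inj ht
        exact h2
      refine ⟨t.dropLast, ?_⟩
      have := List.dropLast_append_getLast htne
      rw [hgl] at this
      conv_lhs => rw [← this]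
      rfl
  · -- not PTL-definable
    rintro ⟨ψ, hψ⟩
    -- the alternating word family
    set c : ℕ → α := fun i => if i % 2 = 0 then b else a with hc
    set W : ℕ → List α := fun k => a :: (List.range (k + 1)).map c with hW
    have hWsucc : ∀ k, W (k + 1) = W k ++ [c (k + 1)] := by
      intro k
      simp only [hW, List.range_succ (n := k + 1), List.map_append]
      simp
    -- membership in L alternates
    have hmem : ∀ k, (W k ∈ {w : List α | ∃ u : List α, w = a :: u ++ [b]} ↔ k % 2 = 0) := by
      intro k
      constructor
      · rintro ⟨u, hu⟩
        simp only [hW, List.range_succ (n := k), List.map_append, List.map_cons, List.map_nil] at hu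
        have := (List.cons.inj hu).2
        have h2 := (List.append_inj' this (by simp)).2
        have : c k = b := by simpa using h2
        by_contra hodd
        simp [hc, hodd] at this
        exact hab this
      · intro hk
        refine ⟨(List.range k).map c, ?_⟩
        simp only [hW, List.range_succ (n := k), List.map_append, List.map_cons, List.map_nil]
        have : c k = b := by simp [hc, hk]
        simp [this]
      -- end membership
    -- end-satisfaction is eventually constant for every formula
    have key : ∀ χ : PTL α, ∃ K : ℕ, ∀ k, K ≤ k →
        (PTL.Sat (W k) χ ((W k).length + 1) ↔ PTL.Sat (W K) χ ((W K).length + 1)) := by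
      intro χ
      induction χ with
      | atom d =>
          refine ⟨0, fun k _ => ?_⟩
          have h1 : ∀ j, ¬ PTL.Sat (W j) (.atom d) ((W j).length + 1) := by
            intro j hsat
            have := hsat.2
            rw [List.getElem?_eq_none (by omega)] at this
            simp at this
          simp [h1 k, h1 0]
      | conj ψ₁ ψ₂ ih1 ih2 =>
          obtain ⟨K₁, h1⟩ := ih1
          obtain ⟨K₂, h2⟩ := ih2
          refine ⟨max K₁ K₂, fun k hk => ?_⟩
          have e1 := h1 k (le_trans (le_max_left _ _) hk)
          have e2 := h2 k (le_trans (le_max_right _ _) hk)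
          have f1 := h1 (max K₁ K₂) (le_max_left _ _)
          have f2 := h2 (max K₁ K₂) (le_max_right _ _)
          simp only [PTL.Sat] at *
          tauto
      | neg ψ ih =>
          obtain ⟨K, h⟩ := ih
          exact ⟨K, fun k hk => by simp only [PTL.Sat]; rw [h k hk]⟩
      | past ψ ih =>
          -- monotone, so eventually constant
          have mono : ∀ k, PTL.Sat (W k) (.past ψ) ((W k).length + 1) →
              PTL.Sat (W (k + 1)) (.past ψ) ((W (k + 1)).length + 1) := by
            intro k h
            rw [hWsucc k]
            exact PTL.past_mono _ _ _ h
          by_cases hex : ∃ K, PTL.Sat (W K) (.past ψ) ((W K).length + 1)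
          · obtain ⟨K, hK⟩ := hex
            refine ⟨K, fun k hk => ?_⟩
            have : ∀ j, K ≤ j → PTL.Sat (W j) (.past ψ) ((W j).length + 1) := by
              intro j hj
              induction j, hj using Nat.le_induction with
              | base => exact hK
              | succ n hn ihn => exact mono n ihn
            simp [this k hk, hK]
          · push_neg at hex
            exact ⟨0, fun k _ => by simp [hex k, hex 0]⟩
    obtain ⟨K, hK⟩ := key ψ
    have hT : ∀ k, (PTL.Sat (W k) ψ ((W k).length + 1) ↔ k % 2 = 0) := by
      intro k
      rw [← hmem k]
      exact (hψ (W k)).symm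
    have h1 := hK (2 * K) (by omega)
    have h2 := hK (2 * K + 1) (by omega)
    rw [hT (2 * K), hT K] at h1
    rw [hT (2 * K + 1), hT K] at h2
    have e1 : K % 2 = 0 := h1.mp (by omega)
    exact absurd (h2.mpr e1) (by omega)
  · -- PTL ⊆ LTL[P,F]
    rintro L ⟨ψ, hψ⟩
    refine ⟨ψ.toLTLPF, fun w => ?_⟩
    rw [hψ w, PTL.Models, LTLPF.Models, PTL.sat_toLTLPF]
end

section
/- A finite monoid M is R-trivial if and only if there exists an integer K > 0 such that (st)^K s = (st)^K for all s, t ∈ M. -/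
/-- A monoid `M` is R-trivial if `sM = tM` implies `s = t`. -/
def RTrivial (M : Type*) [Monoid M] : Prop :=
  ∀ s t : M, Set.range (fun m => s * m) = Set.range (fun m => t * m) → s = t

private lemma exists_pow_idem {M : Type*} [Monoid M] [Fintype M] (x : M) :
    ∃ n : ℕ, 0 < n ∧ IsIdempotentElem (x ^ n) := by
  obtain ⟨a, b, hab, hne⟩ := Finite.exists_ne_map_eq_of_infinite (fun n : ℕ => x ^ n)
  wlog hlt : a < b generalizing a b
  · exact this b a hab.symm hne.symm (by omega)
  set p := b - a with hp
  have hp0 : 0 < p := by omega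
  have hb : a + p = b := by omega
  have key : ∀ c, a ≤ c → x ^ (c + p) = x ^ c := by
    intro c hc
    obtain ⟨d, rfl⟩ := Nat.exists_eq_add_of_le hc
    calc x ^ (a + d + p) = x ^ (a + p) * x ^ d := by rw [← pow_add]; ring_nf
      _ = x ^ b * x ^ d := by rw [hb]
      _ = x ^ a * x ^ d := by rw [← hne]
      _ = x ^ (a + d) := by rw [← pow_add]
  have key2 : ∀ t c, a ≤ c → x ^ (c + t * p) = x ^ c := by
    intro t
    induction t with
    | zero => simp
    | succ t ih =>
      intro c hc
      have h1 : c + (t + 1) * p = (c + t * p) + p := by ring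
      rw [h1, key _ (by omega), ih c hc]
  refine ⟨b * p, Nat.mul_pos (by omega) hp0, ?_⟩
  show x ^ (b * p) * x ^ (b * p) = x ^ (b * p)
  rw [← pow_add]
  exact key2 b (b * p) (by nlinarith)

private lemma exists_uniform_pow_idem (M : Type*) [Monoid M] [Fintype M] :
    ∃ K : ℕ, 0 < K ∧ ∀ x : M, IsIdempotentElem (x ^ K) := by
  choose n hn hidem using exists_pow_idem (M := M)
  refine ⟨∏ x : M, n x, Finset.prod_pos (fun x _ => hn x), fun x => ?_⟩
  obtain ⟨m, hm⟩ := Finset.dvd_prod_of_mem n (Finset.mem_univ x)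
  rw [hm, pow_mul]
  exact (hidem x).pow m

/-- A finite monoid `M` is R-trivial iff there is `K > 0` with
`(st)^K s = (st)^K` for all `s, t ∈ M`. -/
theorem rtrivial_iff_pow (M : Type*) [Monoid M] [Fintype M] :
    RTrivial M ↔ ∃ K : ℕ, 0 < K ∧ ∀ s t : M, (s * t) ^ K * s = (s * t) ^ K := by
  constructor
  · intro h
    obtain ⟨K, hK, hidem⟩ := exists_uniform_pow_idem M
    refine ⟨K, hK, fun s t => ?_⟩
    set e := (s * t) ^ K with he
    have hee : e * e = e := hidem (s * t)
    have hstep : (s * t) * (s * t) ^ (K - 1) = e := by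
      rw [he, ← pow_succ']
      congr 1
      omega
    have hkey : e * s * (t * (s * t) ^ (K - 1)) = e := by
      calc e * s * (t * (s * t) ^ (K - 1))
          = e * ((s * t) * (s * t) ^ (K - 1)) := by
            simp only [mul_assoc]
        _ = e * e := by rw [hstep]
        _ = e := hee
    apply h
    ext y
    simp only [Set.mem_range]
    constructor
    · rintro ⟨m, rfl⟩
      exact ⟨s * m, by rw [← mul_assoc]⟩
    · rintro ⟨m, rfl⟩
      exact ⟨t * (s * t) ^ (K - 1) * m, by rw [← mul_assoc, hkey]⟩
  · rintro ⟨K, hK, hpow⟩ s t hrange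
    have hs : ∃ a, t * a = s := by
      have : s ∈ Set.range (fun m => t * m) := by
        rw [← hrange]; exact ⟨1, mul_one s⟩
      exact this
    have ht : ∃ b, s * b = t := by
      have : t ∈ Set.range (fun m => s * m) := by
        rw [hrange]; exact ⟨1, mul_one t⟩
      exact this
    obtain ⟨a, ha⟩ := hs
    obtain ⟨b, hb⟩ := ht
    have hsba : s * (b * a) = s := by
      rw [← mul_assoc, hb, ha]
    have hpown : ∀ n, s * (b * a) ^ n = s := by
      intro n
      induction n with
      | zero => simp
      | succ n ih => rw [pow_succ, ← mul_assoc, ih, hsba]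
    have : t = s := by
      calc t = s * b := hb.symm
        _ = s * (b * a) ^ K * b := by rw [hpown K]
        _ = s * ((b * a) ^ K * b) := by rw [mul_assoc]
        _ = s * (b * a) ^ K := by rw [hpow b a]
        _ = s := hpown K
    exact this.symm
end
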